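/- Suppose there exist real constants α, β, γ and a bounded measurable function ψ : S_X → ℝ such that for every x ∈ S_X and y ∈ S_Y: (i) α f_X(x) + β f_Y(x) + γ = ψ(x) − λ ω_X ∫_{S_X} ψ(s) dσ_X^X[x](s) − (1−λ) ω_X ∫_{S_X} ψ(s) dσ_X^0(s), and (ii) α g_X(y) + β g_Y(y) + γ = − λ ω_X ∫_{S_X} ψ(s) dσ_X^Y[y](s) − (1−λ) ω_X ∫_{S_X} ψ(s) dσ_X^0(s). Then for every play distribution (ν_t)_{t≥0} consistent with (σ_X^0, σ_X), the average payoffs π_X := (1−λ) ∑_{t=0}^∞ λ^t ∫_{S_X ⊔ S_Y} u_X(s) dν_t(s) and π_Y := (1−λ) ∑_{t=0}^∞ λ^t ∫_{S_X ⊔ S_Y} u_Y(s) dν_t(s), where u_X equals f_X on S_X and g_X on S_Y, and u_Y equals f_Y on S_X and g_Y on S_Y, satisfy α π_X + β π_Y + γ = 0. In other words, the memory-one strategy (σ_X^0, σ_X^X, σ_X^Y) unilaterally enforces α π_X + β π_Y + γ = 0 for every strategy of player Y. -/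

import Mathlib

open MeasureTheory ProbabilityTheory

private lemma aux_integrable_of_abs_le {T : Type*} [MeasurableSpace T] (m : Measure T)
    [IsFiniteMeasure m] {f : T → ℝ} (hf : AEStronglyMeasurable f m) {D : ℝ}
    (hD : ∀ s, |f s| ≤ D) : Integrable f m :=
  ⟨hf, HasFiniteIntegral.of_bounded (C := D)
    (Filter.Eventually.of_forall fun s => by simpa [Real.norm_eq_abs] using hD s)⟩

private lemma aux_abs_integral_le {T : Type*} [MeasurableSpace T] (m : Measure T)
    [IsProbabilityMeasure m] {f : T → ℝ} {D : ℝ} (hD : ∀ s, |f s| ≤ D) :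
    |∫ s, f s ∂m| ≤ D := by
  have := norm_integral_le_of_norm_le_const (μ := m) (f := f) (C := D)
    (Filter.Eventually.of_forall fun s => by simpa [Real.norm_eq_abs] using hD s)
  simpa [Real.norm_eq_abs, measure_univ] using this

private lemma aux_integral_bind {A B : Type*} [MeasurableSpace A] [MeasurableSpace B]
    (μ : Measure A) [IsFiniteMeasure μ] (κ : Kernel A B) [IsMarkovKernel κ]
    {ψ : B → ℝ} (hψm : Measurable ψ) {C : ℝ} (hψb : ∀ b, |ψ b| ≤ C) :
    ∫ b, ψ b ∂(μ.bind (fun a => κ a)) = ∫ a, ∫ b, ψ b ∂(κ a) ∂μ := by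
  have hmap : (μ.compProd κ).map Prod.snd = μ.bind (fun a => κ a) := by
    ext s hs
    rw [Measure.map_apply measurable_snd hs, Measure.compProd_apply (measurable_snd hs),
      Measure.bind_apply hs (Kernel.measurable κ).aemeasurable]
    rfl
  have hint : Integrable (fun p : A × B => ψ p.2) (μ.compProd κ) :=
    aux_integrable_of_abs_le _ ((hψm.comp measurable_snd).aestronglyMeasurable)
      (fun p => hψb p.2)
  rw [← hmap, integral_map measurable_snd.aemeasurable hψm.aestronglyMeasurable]
  exact Measure.integral_compProd hint

theorem stmt_8
    {SX SY : Type*} [MeasurableSpace SX] [MeasurableSpace SY]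
    (lam : ℝ) (hlam0 : 0 < lam) (hlam1 : lam < 1)
    (ωX : ℝ) (hω0 : 0 ≤ ωX) (hω1 : ωX ≤ 1)
    (fX fY : SX → ℝ) (gX gY : SY → ℝ)
    (hfXm : Measurable fX) (hfYm : Measurable fY)
    (hgXm : Measurable gX) (hgYm : Measurable gY)
    (Cf : ℝ) (hfXb : ∀ x, |fX x| ≤ Cf) (hfYb : ∀ x, |fY x| ≤ Cf)
    (hgXb : ∀ y, |gX y| ≤ Cf) (hgYb : ∀ y, |gY y| ≤ Cf)
    (σX0 : Measure SX) [IsProbabilityMeasure σX0]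
    (σX : ProbabilityTheory.Kernel (SX ⊕ SY) SX) [ProbabilityTheory.IsMarkovKernel σX]
    (α β γ : ℝ)
    (ψ : SX → ℝ) (hψm : Measurable ψ) (C : ℝ) (hψb : ∀ s, |ψ s| ≤ C)
    (hidX : ∀ x : SX,
      α * fX x + β * fY x + γ =
        ψ x - lam * ωX * (∫ s, ψ s ∂(σX (Sum.inl x)))
          - (1 - lam) * ωX * (∫ s, ψ s ∂σX0))
    (hidY : ∀ y : SY,
      α * gX y + β * gY y + γ =
        - (lam * ωX * (∫ s, ψ s ∂(σX (Sum.inr y))))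
          - (1 - lam) * ωX * (∫ s, ψ s ∂σX0))
    (ν : ℕ → Measure (SX ⊕ SY)) (hν : ∀ t, IsProbabilityMeasure (ν t))
    (hν0 : ∀ E : Set SX, MeasurableSet E →
      ν 0 (Sum.inl '' E) = ENNReal.ofReal ωX * σX0 E)
    (hνsucc : ∀ (t : ℕ) (E : Set SX), MeasurableSet E →
      ν (t + 1) (Sum.inl '' E) = ENNReal.ofReal ωX * ∫⁻ s, σX s E ∂(ν t)) :
    α * ((1 - lam) * ∑' t : ℕ, lam ^ t * ∫ s, Sum.elim fX gX s ∂(ν t))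
      + β * ((1 - lam) * ∑' t : ℕ, lam ^ t * ∫ s, Sum.elim fY gY s ∂(ν t))
      + γ = 0 := by
  classical
  -- abbreviations
  set cX : ℕ → ℝ := fun t => ∫ s, Sum.elim fX gX s ∂(ν t) with hcX_def
  set cY : ℕ → ℝ := fun t => ∫ s, Sum.elim fY gY s ∂(ν t) with hcY_def
  set Ψ : SX ⊕ SY → ℝ := Sum.elim ψ (fun _ => (0:ℝ)) with hΨ_def
  set I : SX ⊕ SY → ℝ := fun s => ∫ x, ψ x ∂(σX s) with hI_def
  set K : ℝ := ∫ x, ψ x ∂σX0 with hK_def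
  set a : ℕ → ℝ := fun t => ∫ s, Ψ s ∂(ν t) with ha_def
  set C' : ℝ := max C 0 with hC'_def
  set Cf' : ℝ := max Cf 0 with hCf'_def
  have hΨm : Measurable Ψ := hψm.sumElim measurable_const
  have hΨb : ∀ s, |Ψ s| ≤ C' := by
    rintro (x | y)
    · exact (hψb x).trans (le_max_left _ _)
    · simp [hΨ_def, hC'_def]
  have hXm : Measurable (Sum.elim fX gX) := hfXm.sumElim hgXm
  have hYm : Measurable (Sum.elim fY gY) := hfYm.sumElim hgYm
  have hXb : ∀ s, |Sum.elim fX gX s| ≤ Cf' := by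
    rintro (x | y)
    · exact (hfXb x).trans (le_max_left _ _)
    · exact (hgXb y).trans (le_max_left _ _)
  have hYb : ∀ s, |Sum.elim fY gY s| ≤ Cf' := by
    rintro (x | y)
    · exact (hfYb x).trans (le_max_left _ _)
    · exact (hgYb y).trans (le_max_left _ _)
  have hIm : StronglyMeasurable I :=
    MeasureTheory.StronglyMeasurable.integral_kernel_prod_right (κ := σX)
      (f := fun _ x => ψ x) ((hψm.comp measurable_snd).stronglyMeasurable)
  have hIb : ∀ s, |I s| ≤ C' := fun s =>
    aux_abs_integral_le (σX s) (fun x => (hψb x).trans (le_max_left _ _))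
  -- pulled-back measures on SX
  have himg : ∀ s : Set SX, MeasurableSet s → MeasurableSet (Sum.inl '' s : Set (SX ⊕ SY)) :=
    fun s hs => hs.inl_image
  set μ : ℕ → Measure SX := fun t => Measure.comap Sum.inl (ν t) with hμ_def
  have hμap : ∀ (t : ℕ) (E : Set SX), MeasurableSet E → μ t E = ν t (Sum.inl '' E) :=
    fun t E hE => Measure.comap_apply Sum.inl Sum.inl_injective himg (ν t) hE
  have hμfin : ∀ t, IsFiniteMeasure (μ t) := by
    intro t
    haveI := hν t
    refine ⟨?_⟩
    rw [hμap t _ MeasurableSet.univ]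
    exact measure_lt_top _ _
  -- a t as an integral over μ t
  have ha_eq : ∀ t, a t = ∫ x, ψ x ∂(μ t) := by
    intro t
    haveI := hν t
    haveI := hμfin t
    have hR : MeasurableSet (Set.range (Sum.inl : SX → SX ⊕ SY)) := measurableSet_range_inl
    have hrestrict : (ν t).restrict (Set.range (Sum.inl : SX → SX ⊕ SY))
        = (μ t).map Sum.inl := by
      ext E hE
      rw [Measure.map_apply measurable_inl hE, Measure.restrict_apply hE,
        hμap t _ (measurable_inl hE), Set.image_preimage_eq_inter_range]
    have hint : Integrable Ψ (ν t) :=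
      aux_integrable_of_abs_le _ hΨm.aestronglyMeasurable hΨb
    have hsplit := integral_add_compl hR hint
    have hz : ∫ s in (Set.range (Sum.inl : SX → SX ⊕ SY))ᶜ, Ψ s ∂(ν t) = 0 := by
      refine setIntegral_eq_zero_of_forall_eq_zero ?_
      rintro (x | y) hs
      · exact absurd ⟨x, rfl⟩ hs
      · rfl
    have h3 : ∫ s in Set.range (Sum.inl : SX → SX ⊕ SY), Ψ s ∂(ν t) = ∫ x, ψ x ∂(μ t) := by
      rw [hrestrict, integral_map measurable_inl.aemeasurable hΨm.aestronglyMeasurable]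
      simp [hΨ_def]
    have : a t = ∫ s in Set.range (Sum.inl : SX → SX ⊕ SY), Ψ s ∂(ν t)
        + ∫ s in (Set.range (Sum.inl : SX → SX ⊕ SY))ᶜ, Ψ s ∂(ν t) := hsplit.symm
    rw [this, hz, h3, add_zero]
  -- a 0
  have ha0 : a 0 = ωX * K := by
    haveI := hν 0
    have hμ0 : μ 0 = (ENNReal.ofReal ωX) • σX0 := by
      ext E hE
      rw [hμap 0 E hE, hν0 E hE, Measure.smul_apply, smul_eq_mul]
    rw [ha_eq 0, hμ0, integral_smul_measure, ENNReal.toReal_ofReal hω0, smul_eq_mul, hK_def]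
  -- a (t+1)
  have hasucc : ∀ t, a (t + 1) = ωX * ∫ s, I s ∂(ν t) := by
    intro t
    haveI := hν t
    have hμs : μ (t + 1) = (ENNReal.ofReal ωX) • ((ν t).bind (fun s => σX s)) := by
      ext E hE
      rw [hμap _ E hE, hνsucc t E hE, Measure.smul_apply, smul_eq_mul,
        Measure.bind_apply hE (Kernel.measurable σX).aemeasurable]
    rw [ha_eq, hμs, integral_smul_measure, ENNReal.toReal_ofReal hω0, smul_eq_mul,
      aux_integral_bind (ν t) σX hψm hψb]
  -- pointwise identity
  have hpt : ∀ s, α * Sum.elim fX gX s + β * Sum.elim fY gY s + γ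
      = Ψ s - lam * ωX * I s - (1 - lam) * ωX * K := by
    rintro (x | y)
    · simpa [hΨ_def, hI_def, hK_def] using hidX x
    · simpa [hΨ_def, hI_def, hK_def, zero_sub] using hidY y
  -- single-round identity for the integrals
  have hb : ∀ t, α * cX t + β * cY t + γ = a t - lam * a (t + 1) - (1 - lam) * a 0 := by
    intro t
    haveI := hν t
    have intX : Integrable (Sum.elim fX gX) (ν t) :=
      aux_integrable_of_abs_le _ hXm.aestronglyMeasurable hXb
    have intY : Integrable (Sum.elim fY gY) (ν t) :=
      aux_integrable_of_abs_le _ hYm.aestronglyMeasurable hYb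
    have intΨ : Integrable Ψ (ν t) :=
      aux_integrable_of_abs_le _ hΨm.aestronglyMeasurable hΨb
    have intI : Integrable I (ν t) :=
      aux_integrable_of_abs_le _ hIm.aestronglyMeasurable hIb
    have intA : Integrable (fun s => α * Sum.elim fX gX s) (ν t) := intX.const_mul α
    have intB : Integrable (fun s => β * Sum.elim fY gY s) (ν t) := intY.const_mul β
    have intAB : Integrable (fun s => α * Sum.elim fX gX s + β * Sum.elim fY gY s) (ν t) :=
      intA.add intB
    have e1 : ∫ s, (α * Sum.elim fX gX s + β * Sum.elim fY gY s + γ) ∂(ν t)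
        = α * cX t + β * cY t + γ := by
      rw [integral_add intAB (integrable_const γ), integral_add intA intB,
        integral_const_mul, integral_const_mul, integral_const]
      simp [measure_univ, hcX_def, hcY_def]
    have e2 : ∫ s, (Ψ s - lam * ωX * I s - (1 - lam) * ωX * K) ∂(ν t)
        = a t - lam * a (t + 1) - (1 - lam) * a 0 := by
      have intI2 : Integrable (fun s => lam * ωX * I s) (ν t) := intI.const_mul (lam * ωX)
      have intΨI : Integrable (fun s => Ψ s - lam * ωX * I s) (ν t) := intΨ.sub intI2
      rw [integral_sub intΨI (integrable_const ((1 - lam) * ωX * K)),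
        integral_sub intΨ intI2, integral_const_mul, integral_const, hasucc t, ha0]
      simp [measure_univ]
      ring
    calc α * cX t + β * cY t + γ
        = ∫ s, (α * Sum.elim fX gX s + β * Sum.elim fY gY s + γ) ∂(ν t) := e1.symm
      _ = ∫ s, (Ψ s - lam * ωX * I s - (1 - lam) * ωX * K) ∂(ν t) :=
          integral_congr_ae (Filter.Eventually.of_forall hpt)
      _ = a t - lam * a (t + 1) - (1 - lam) * a 0 := e2
  -- summability
  have hgeom : Summable (fun t : ℕ => lam ^ t) :=
    summable_geometric_of_lt_one hlam0.le hlam1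
  have hsum : ∀ (c : ℕ → ℝ) (D : ℝ), (∀ t, |c t| ≤ D) →
      Summable (fun t => lam ^ t * c t) := by
    intro c D hD
    refine Summable.of_norm_bounded (g := fun t => D * lam ^ t) (hgeom.mul_left D) fun t => ?_
    rw [Real.norm_eq_abs, abs_mul, abs_pow, abs_of_pos hlam0]
    calc lam ^ t * |c t| ≤ lam ^ t * D :=
          mul_le_mul_of_nonneg_left (hD t) (pow_nonneg hlam0.le t)
      _ = D * lam ^ t := mul_comm _ _
  have hcXb : ∀ t, |cX t| ≤ Cf' := fun t => by
    haveI := hν t; exact aux_abs_integral_le (ν t) hXb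
  have hcYb : ∀ t, |cY t| ≤ Cf' := fun t => by
    haveI := hν t; exact aux_abs_integral_le (ν t) hYb
  have hab : ∀ t, |a t| ≤ C' := fun t => by
    haveI := hν t; exact aux_abs_integral_le (ν t) hΨb
  have sX := hsum cX Cf' hcXb
  have sY := hsum cY Cf' hcYb
  have sa := hsum a C' hab
  have sa' := hsum (fun t => a (t + 1)) C' (fun t => hab (t + 1))
  have hne : (1 : ℝ) - lam ≠ 0 := by linarith
  have hgeom_sum : (∑' t : ℕ, lam ^ t) = (1 - lam)⁻¹ :=
    tsum_geometric_of_lt_one hlam0.le hlam1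
  -- telescoping: the weighted sum of the right-hand sides vanishes
  have hT : (∑' t : ℕ, lam ^ t * (a t - lam * a (t + 1) - (1 - lam) * a 0)) = 0 := by
    have h1 : ∀ t : ℕ, lam ^ t * (a t - lam * a (t + 1) - (1 - lam) * a 0)
        = lam ^ t * a t - lam * (lam ^ t * a (t + 1)) - ((1 - lam) * a 0) * lam ^ t := by
      intro t; ring
    rw [tsum_congr h1,
      Summable.tsum_sub (sa.sub (sa'.mul_left lam)) (hgeom.mul_left ((1 - lam) * a 0)),
      Summable.tsum_sub sa (sa'.mul_left lam), tsum_mul_left, tsum_mul_left, hgeom_sum]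
    have h2 : (∑' t : ℕ, lam ^ t * a t) = a 0 + lam * ∑' t : ℕ, lam ^ t * a (t + 1) := by
      rw [Summable.tsum_eq_zero_add sa, pow_zero, one_mul, ← tsum_mul_left]
      congr 1
      exact tsum_congr fun n => by ring
    rw [h2]
    field_simp
    ring
  -- the weighted sum of the left-hand sides
  have hT' : (∑' t : ℕ, lam ^ t * (α * cX t + β * cY t + γ))
      = α * (∑' t : ℕ, lam ^ t * cX t) + β * (∑' t : ℕ, lam ^ t * cY t)
        + γ * (1 - lam)⁻¹ := by
    have h1 : ∀ t : ℕ, lam ^ t * (α * cX t + β * cY t + γ)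
        = α * (lam ^ t * cX t) + β * (lam ^ t * cY t) + γ * lam ^ t := by
      intro t; ring
    rw [tsum_congr h1,
      Summable.tsum_add ((sX.mul_left α).add (sY.mul_left β)) (hgeom.mul_left γ),
      Summable.tsum_add (sX.mul_left α) (sY.mul_left β),
      tsum_mul_left, tsum_mul_left, tsum_mul_left, hgeom_sum]
  have key : α * (∑' t : ℕ, lam ^ t * cX t) + β * (∑' t : ℕ, lam ^ t * cY t)
      + γ * (1 - lam)⁻¹ = 0 := by
    rw [← hT', tsum_congr fun t => by rw [hb t]]
    exact hT
  have key' : (1 - lam) * (α * (∑' t : ℕ, lam ^ t * cX t)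
      + β * (∑' t : ℕ, lam ^ t * cY t) + γ * (1 - lam)⁻¹) = 0 := by
    rw [key]; ring
  have hinv : (1 - lam) * (1 - lam)⁻¹ = 1 := mul_inv_cancel₀ hne
  linear_combination key' - γ * hinv
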